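/- arXiv:2003.02499 — 2 statements merged into one kernel-verified Lean document; each statement's English description precedes it below -/
import Mathlib

section
/- For any x ∈ S(ℤ), the decreasing rearrangement of Dx satisfies the pointwise inequalities (Dx)* ≤ D(o(x)) ≤ σ₂(Dx)*, where o(x) is the sequence of ordering numbers o_n(x) = sup_{k≥n}|x_k| and σ₂ f(t) = f(t/2) is the dilation operator. -/
set_option maxHeartbeats 1000000

open MeasureTheory Real

/-- Ordering number `o_n(x) = sup_{k ≥ n} |x_k|`. -/
noncomputable def ordNum (x : ℤ → ℝ) (n : ℤ) : ℝ :=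
  ⨆ k : {k : ℤ // n ≤ k}, |x k.1|

/-- `x ∈ S(ℤ)`: bounded at `+∞`. -/
def memSZ (x : ℤ → ℝ) : Prop :=
  ∀ n : ℤ, BddAbove (Set.range fun k : {k : ℤ // n ≤ k} => |x k.1|)

/-- Pietsch operator: `Dx = Σ_{n∈ℤ} x_n χ_{[2^n,2^{n+1})}` (and `0` off `(0,∞)`). -/
noncomputable def Dop (x : ℤ → ℝ) (t : ℝ) : ℝ :=
  if 0 < t then x ⌊Real.logb 2 t⌋ else 0

/-- Decreasing rearrangement of a function on `(0,∞)`. -/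
noncomputable def rearr (f : ℝ → ℝ) (t : ℝ) : ℝ :=
  sInf {s : ℝ | 0 ≤ s ∧ volume {u : ℝ | 0 < u ∧ s < |f u|} ≤ ENNReal.ofReal t}

/-- Right shift `(S₊x)_n = x_{n-1}`. -/
def shiftR (x : ℤ → ℝ) : ℤ → ℝ := fun n => x (n - 1)

lemma floor_logb_eq {k : ℤ} {u : ℝ} (h1 : (2:ℝ) ^ (k:ℝ) ≤ u) (h2 : u < (2:ℝ) ^ ((k:ℝ)+1)) :
    ⌊Real.logb 2 u⌋ = k := by
  have hu : 0 < u := lt_of_lt_of_le (Real.rpow_pos_of_pos two_pos _) h1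
  have hb : (1:ℝ) < 2 := one_lt_two
  rw [Int.floor_eq_iff]
  constructor
  · rw [Real.le_logb_iff_rpow_le hb hu]; exact h1
  · rw [Real.logb_lt_iff_lt_rpow hb hu]
    exact h2

lemma subset_Ioo_of_ordNum_le (x : ℤ → ℝ) (hx : memSZ x) (m : ℤ) {s : ℝ}
    (hs : ordNum x m ≤ s) :
    {u : ℝ | 0 < u ∧ s < |Dop x u|} ⊆ Set.Ioo 0 ((2:ℝ) ^ (m:ℝ)) := by
  rintro u ⟨hu, hlt⟩
  refine ⟨hu, ?_⟩
  by_contra hle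
  push_neg at hle
  have hmn : m ≤ ⌊Real.logb 2 u⌋ := by
    apply Int.le_floor.2
    rw [Real.le_logb_iff_rpow_le one_lt_two hu]
    exact hle
  have : |Dop x u| ≤ ordNum x m := by
    rw [show Dop x u = x ⌊Real.logb 2 u⌋ by simp [Dop, hu]]
    exact le_ciSup (hx m) ⟨_, hmn⟩
  exact absurd hlt (not_lt.2 (this.trans hs))

lemma mem_dyadic {k : ℤ} {u : ℝ} (hu1 : (2:ℝ) ^ (k:ℝ) ≤ u) (hu2 : u < (2:ℝ) ^ ((k:ℝ)+1)) :
    0 < u ∧ ⌊Real.logb 2 u⌋ = k :=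
  ⟨lt_of_lt_of_le (Real.rpow_pos_of_pos two_pos _) hu1, floor_logb_eq hu1 hu2⟩

/-- `(Dx)^* ≤ D(o(x)) ≤ σ₂ (Dx)^*` pointwise on `(0,∞)`. -/
theorem rearr_Dop_le_Dop_ordNum_le_dilation (x : ℤ → ℝ) (hx : memSZ x) :
    ∀ t : ℝ, 0 < t →
      rearr (Dop x) t ≤ Dop (ordNum x) t ∧
      Dop (ordNum x) t ≤ rearr (Dop x) (t / 2) := by
  intro t ht
  set n : ℤ := ⌊Real.logb 2 t⌋ with hn
  have hb : (1:ℝ) < 2 := one_lt_two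
  have hDo : Dop (ordNum x) t = ordNum x n := by simp [Dop, ht, hn]
  -- basic facts
  have hx2n : (2:ℝ) ^ (n:ℝ) ≤ t := by
    rw [← Real.rpow_logb two_pos (by norm_num) ht]
    exact Real.rpow_le_rpow_of_exponent_le (le_of_lt hb) (Int.floor_le _)
  have ht2 : t < (2:ℝ) ^ ((n:ℝ)+1) := by
    rw [← Real.rpow_logb two_pos (by norm_num) ht]
    apply Real.rpow_lt_rpow_of_exponent_lt hb
    have := Int.lt_floor_add_one (Real.logb 2 t)
    push_cast at this ⊢
    linarith
  have hnonneg : 0 ≤ ordNum x n := by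
    have : |x n| ≤ ordNum x n := le_ciSup (hx n) ⟨n, le_refl n⟩
    exact le_trans (abs_nonneg _) this
  -- value of ordNum ≥ each |x_k|
  constructor
  · -- rearr (Dop x) t ≤ ordNum x n
    rw [hDo]
    apply csInf_le
    · exact ⟨0, fun s hs => hs.1⟩
    refine ⟨hnonneg, ?_⟩
    have hsub := subset_Ioo_of_ordNum_le x hx n (le_refl (ordNum x n))
    calc volume {u : ℝ | 0 < u ∧ ordNum x n < |Dop x u|}
        ≤ volume (Set.Ioo 0 ((2:ℝ) ^ (n:ℝ))) := measure_mono hsub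
      _ = ENNReal.ofReal ((2:ℝ) ^ (n:ℝ)) := by rw [Real.volume_Ioo, sub_zero]
      _ ≤ ENNReal.ofReal t := ENNReal.ofReal_le_ofReal hx2n
  · -- ordNum x n ≤ rearr (Dop x) (t/2)
    rw [hDo]
    -- key: any s in the set is ≥ ordNum x n
    have hlb : ∀ s ∈ {s : ℝ | 0 ≤ s ∧ volume {u : ℝ | 0 < u ∧ s < |Dop x u|} ≤ ENNReal.ofReal (t/2)},
        ordNum x n ≤ s := by
      rintro s ⟨hs0, hsm⟩
      by_contra hlt
      push_neg at hlt
      -- ∃ k ≥ n, s < |x k|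
      obtain ⟨⟨k, hk⟩, hks⟩ := exists_lt_of_lt_ciSup hlt
      have hsub : Set.Ico ((2:ℝ) ^ (k:ℝ)) ((2:ℝ) ^ ((k:ℝ)+1)) ⊆
          {u : ℝ | 0 < u ∧ s < |Dop x u|} := by
        rintro u ⟨hu1, hu2⟩
        obtain ⟨hu, hfl⟩ := mem_dyadic hu1 hu2
        refine ⟨hu, ?_⟩
        rw [show Dop x u = x k by simp [Dop, hu, hfl]]
        exact hks
      have hvol : ENNReal.ofReal ((2:ℝ) ^ (k:ℝ)) ≤ ENNReal.ofReal (t/2) := by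
        calc ENNReal.ofReal ((2:ℝ) ^ (k:ℝ))
            = volume (Set.Ico ((2:ℝ) ^ (k:ℝ)) ((2:ℝ) ^ ((k:ℝ)+1))) := by
              rw [Real.volume_Ico]
              congr 1
              rw [Real.rpow_add two_pos, Real.rpow_one]
              ring
          _ ≤ volume {u : ℝ | 0 < u ∧ s < |Dop x u|} := measure_mono hsub
          _ ≤ ENNReal.ofReal (t/2) := hsm
      have h2k : (2:ℝ) ^ (k:ℝ) ≤ t / 2 := by
        have := (ENNReal.ofReal_le_ofReal_iff (by positivity : (0:ℝ) ≤ t/2)).1 hvol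
        exact this
      have h2n2k : (2:ℝ) ^ (n:ℝ) ≤ (2:ℝ) ^ (k:ℝ) :=
        Real.rpow_le_rpow_of_exponent_le (le_of_lt hb) (by exact_mod_cast hk)
      have : t < (2:ℝ) ^ (n:ℝ) * 2 := by
        rw [show (2:ℝ) ^ (n:ℝ) * 2 = (2:ℝ) ^ ((n:ℝ)+1) by
          rw [Real.rpow_add two_pos, Real.rpow_one]]
        exact ht2
      linarith
    apply le_csInf
    · -- nonempty: pick m with 2^m ≤ t/2, s = max (ordNum x m) 0
      obtain ⟨N, hN⟩ := pow_unbounded_of_one_lt (2 / t) one_lt_two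
      have hpow : (2:ℝ) ^ ((-(N:ℤ)):ℝ) ≤ t / 2 := by
        have h1 : (2:ℝ) ^ ((-(N:ℤ)):ℝ) = ((2:ℝ) ^ N)⁻¹ := by
          rw [show ((-(N:ℤ)):ℝ) = -(N:ℝ) by push_cast; ring,
            Real.rpow_neg (by norm_num), Real.rpow_natCast]
        rw [h1, inv_le_comm₀ (pow_pos two_pos N) (by positivity)]
        have h2 : (t/2)⁻¹ = 2/t := by field_simp
        rw [h2]
        exact hN.le
      have hsub2 := subset_Ioo_of_ordNum_le x hx (-(N:ℤ))
        (le_max_left (ordNum x (-(N:ℤ))) 0)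
      refine ⟨max (ordNum x (-(N:ℤ))) 0, le_max_right _ _, ?_⟩
      refine le_trans (measure_mono hsub2) ?_
      rw [Real.volume_Ioo, sub_zero]
      apply ENNReal.ofReal_le_ofReal
      convert hpow using 2
      push_cast
      ring
    · exact hlb
end

section
/- Let E(0,∞) be a Calkin function space (a linear subspace of S(0,∞) closed under domination of decreasing rearrangements). Then E(ℤ) := {x ∈ S(ℤ) : Dx ∈ E(0,∞)} is a shift-monotone sequence space: it is linear, closed under the right shift S₊, and if o(y) ≤ o(x) pointwise with x ∈ E(ℤ) then y ∈ E(ℤ). -/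
open MeasureTheory Real

namespace CalkinAux

lemma two_zpow_pos (n : ℤ) : (0:ℝ) < 2 ^ n := by positivity

lemma logb_two_zpow (n : ℤ) : Real.logb 2 ((2:ℝ) ^ n) = n := by
  rw [← Real.rpow_intCast, Real.logb_rpow (by norm_num) (by norm_num)]

lemma le_logb_iff {n : ℤ} {u : ℝ} (hu : 0 < u) :
    (n : ℝ) ≤ Real.logb 2 u ↔ (2:ℝ) ^ n ≤ u := by
  rw [← logb_two_zpow n]
  exact Real.logb_le_logb one_lt_two (two_zpow_pos n) hu

lemma zpow_floor_logb_le {u : ℝ} (hu : 0 < u) : (2:ℝ) ^ ⌊Real.logb 2 u⌋ ≤ u :=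
  (le_logb_iff hu).mp (Int.floor_le _)

lemma lt_zpow_floor_logb {u : ℝ} (hu : 0 < u) : u < (2:ℝ) ^ (⌊Real.logb 2 u⌋ + 1) := by
  by_contra h
  push_neg at h
  have h1 : ((⌊Real.logb 2 u⌋ + 1 : ℤ) : ℝ) ≤ Real.logb 2 u := (le_logb_iff hu).mpr h
  have h2 := Int.lt_floor_add_one (Real.logb 2 u)
  push_cast at h1
  linarith

lemma floor_logb_eq {n : ℤ} {u : ℝ} (hu : 0 < u) (h1 : (2:ℝ) ^ n ≤ u)
    (h2 : u < (2:ℝ) ^ (n + 1)) : ⌊Real.logb 2 u⌋ = n := by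
  have ha : (n : ℝ) ≤ Real.logb 2 u := (le_logb_iff hu).mpr h1
  have hb : ¬ ((n + 1 : ℤ) : ℝ) ≤ Real.logb 2 u := by
    intro h
    exact absurd ((le_logb_iff hu).mp h) (not_le.mpr h2)
  have hfa : n ≤ ⌊Real.logb 2 u⌋ := Int.le_floor.mpr ha
  have hfb : ¬ (n + 1 ≤ ⌊Real.logb 2 u⌋) := fun h => hb (Int.le_floor.mp h)
  omega

end CalkinAux

namespace CalkinAux

/-- Part of each dyadic block `[2^n, 2^{n+1})` between relative positions `a` and `b`,
restricted to blocks whose index satisfies `P`. -/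
def blockSet (P : ℤ → Prop) (a b : ℝ) : Set ℝ :=
  {u : ℝ | 0 < u ∧ P ⌊Real.logb 2 u⌋ ∧ a * 2 ^ ⌊Real.logb 2 u⌋ ≤ u ∧
    u < b * 2 ^ ⌊Real.logb 2 u⌋}

lemma mem_Ico_pos {n : ℤ} {a b u : ℝ} (ha : 1 ≤ a) (hb2 : b ≤ 2)
    (h : u ∈ Set.Ico (a * 2 ^ n) (b * 2 ^ n)) : 0 < u ∧ ⌊Real.logb 2 u⌋ = n := by
  obtain ⟨h1, h2⟩ := h
  have hp := two_zpow_pos n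
  have hl : (2:ℝ) ^ n ≤ u := le_trans (by nlinarith) h1
  have hu : 0 < u := lt_of_lt_of_le hp hl
  have hr : u < (2:ℝ) ^ (n + 1) := by
    have : (2:ℝ) ^ (n+1) = 2 * 2 ^ n := by
      rw [zpow_add_one₀ (by norm_num : (2:ℝ) ≠ 0)]; ring
    rw [this]; nlinarith
  exact ⟨hu, floor_logb_eq hu hl hr⟩

lemma blockSet_eq (P : ℤ → Prop) {a b : ℝ} (ha : 1 ≤ a) (hb2 : b ≤ 2) :
    blockSet P a b = ⋃ n : ℤ, ⋃ (_ : P n), Set.Ico (a * 2 ^ n) (b * 2 ^ n) := by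
  ext u
  simp only [blockSet, Set.mem_setOf_eq, Set.mem_iUnion, Set.mem_Ico]
  constructor
  · rintro ⟨hu, hP, h1, h2⟩
    exact ⟨⌊Real.logb 2 u⌋, hP, h1, h2⟩
  · rintro ⟨n, hP, h1, h2⟩
    obtain ⟨hu, hfl⟩ := mem_Ico_pos ha hb2 ⟨h1, h2⟩
    rw [hfl]
    exact ⟨hu, hP, h1, h2⟩

lemma blockSet_measurableSet (P : ℤ → Prop) {a b : ℝ} (ha : 1 ≤ a) (hb2 : b ≤ 2) :
    MeasurableSet (blockSet P a b) := by
  rw [blockSet_eq P ha hb2]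
  exact MeasurableSet.iUnion fun n => MeasurableSet.iUnion fun _ => measurableSet_Ico

open scoped Classical in
lemma blockSet_volume (P : ℤ → Prop) {a b : ℝ} (ha : 1 ≤ a) (hb2 : b ≤ 2) :
    volume (blockSet P a b) =
      ∑' n : ℤ, if P n then ENNReal.ofReal ((b - a) * 2 ^ n) else 0 := by
  rw [blockSet_eq P ha hb2]
  rw [measure_iUnion ?_ ?_]
  · refine tsum_congr fun n => ?_
    by_cases hP : P n
    · simp only [hP, Set.iUnion_true, if_true, Real.volume_Ico]
      congr 1
      ring
    · simp [hP]
  · intro m n hmn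
    simp only [Function.onFun]
    apply Set.disjoint_left.mpr
    intro u hum hun
    simp only [Set.mem_iUnion] at hum hun
    obtain ⟨_, hum⟩ := hum
    obtain ⟨_, hun⟩ := hun
    have e1 := (mem_Ico_pos ha hb2 hum).2
    have e2 := (mem_Ico_pos ha hb2 hun).2
    exact hmn (e1 ▸ e2.symm ▸ rfl)
  · exact fun n => MeasurableSet.iUnion fun _ => measurableSet_Ico

end CalkinAux


namespace CalkinAux

lemma dist_Dop (z : ℤ → ℝ) (s : ℝ) :
    {u : ℝ | 0 < u ∧ s < |Dop z u|} = blockSet (fun n => s < |z n|) 1 2 := by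
  ext u
  simp only [blockSet, Set.mem_setOf_eq]
  constructor
  · rintro ⟨hu, hs⟩
    rw [Dop, if_pos hu] at hs
    refine ⟨hu, hs, by simpa using zpow_floor_logb_le hu, ?_⟩
    have := lt_zpow_floor_logb hu
    rw [zpow_add_one₀ (by norm_num : (2:ℝ) ≠ 0)] at this
    linarith
  · rintro ⟨hu, hs, -, -⟩
    exact ⟨hu, by rw [Dop, if_pos hu]; exact hs⟩

lemma dist_indicator (z : ℤ → ℝ) {a b : ℝ} (ha : 1 ≤ a) (hb2 : b ≤ 2) {s : ℝ}
    (hs : 0 ≤ s) :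
    {u : ℝ | 0 < u ∧ s < |Set.indicator (blockSet (fun _ => True) a b) (Dop z) u|}
      = blockSet (fun n => s < |z n|) a b := by
  ext u
  constructor
  · rintro ⟨hu, hlt⟩
    by_cases hmem : u ∈ blockSet (fun _ => True) a b
    · rw [Set.indicator_of_mem hmem] at hlt
      obtain ⟨-, -, h3, h4⟩ := hmem
      rw [Dop, if_pos hu] at hlt
      exact ⟨hu, hlt, h3, h4⟩
    · rw [Set.indicator_of_notMem hmem] at hlt
      simp only [abs_zero] at hlt
      exact absurd hlt (not_lt.mpr hs)
  · rintro ⟨hu, hs', h3, h4⟩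
    have hmem : u ∈ blockSet (fun _ => True) a b := ⟨hu, trivial, h3, h4⟩
    refine ⟨hu, ?_⟩
    rw [Set.indicator_of_mem hmem, Dop, if_pos hu]
    exact hs'

lemma measurable_Dop (z : ℤ → ℝ) : Measurable (Dop z) := by
  unfold Dop
  refine Measurable.ite (measurableSet_lt measurable_const measurable_id) ?_ measurable_const
  exact measurable_from_top.comp ((Real.measurable_log.div_const _).floor)

lemma rearr_le_of_dist_le (f g : ℝ → ℝ) (t : ℝ)
    (hd : ∀ s : ℝ, 0 ≤ s →
      volume {u : ℝ | 0 < u ∧ s < |f u|} ≤ volume {u : ℝ | 0 < u ∧ s < |g u|})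
    (hne : {s : ℝ | 0 ≤ s ∧ volume {u : ℝ | 0 < u ∧ s < |g u|} ≤ ENNReal.ofReal t}.Nonempty) :
    rearr f t ≤ rearr g t := by
  apply csInf_le_csInf
  · exact ⟨0, fun s hs => hs.1⟩
  · exact hne
  · rintro s ⟨hs0, hsle⟩
    exact ⟨hs0, le_trans (hd s hs0) hsle⟩

lemma dist_nonempty {x : ℤ → ℝ} (hx : memSZ x) {t : ℝ} (ht : 0 < t) :
    {s : ℝ | 0 ≤ s ∧ volume {u : ℝ | 0 < u ∧ s < |Dop x u|} ≤ ENNReal.ofReal t}.Nonempty := by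
  obtain ⟨m, hm⟩ := exists_pow_lt_of_lt_one ht (by norm_num : (1/2 : ℝ) < 1)
  obtain ⟨M, hM⟩ := hx (-(m : ℤ))
  refine ⟨max M 0, le_max_right _ _, ?_⟩
  have hsub : {u : ℝ | 0 < u ∧ max M 0 < |Dop x u|} ⊆ Set.Ioo 0 ((2:ℝ) ^ (-(m:ℤ))) := by
    rintro u ⟨hu, hlt⟩
    refine ⟨hu, ?_⟩
    by_contra h
    push_neg at h
    have hfl : -(m:ℤ) ≤ ⌊Real.logb 2 u⌋ := Int.le_floor.mpr ((le_logb_iff hu).mpr h)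
    have hb : |x ⌊Real.logb 2 u⌋| ≤ M :=
      hM (Set.mem_range_self (⟨⌊Real.logb 2 u⌋, hfl⟩ : {k : ℤ // -(m:ℤ) ≤ k}))
    rw [Dop, if_pos hu] at hlt
    have := le_max_left M 0
    linarith
  have hpow : (2:ℝ) ^ (-(m:ℤ)) = (1/2 : ℝ) ^ m := by
    rw [zpow_neg, zpow_natCast]
    simp [inv_pow, one_div]
  calc volume {u : ℝ | 0 < u ∧ max M 0 < |Dop x u|}
      ≤ volume (Set.Ioo 0 ((2:ℝ) ^ (-(m:ℤ)))) := measure_mono hsub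
    _ = ENNReal.ofReal ((2:ℝ) ^ (-(m:ℤ))) := by simp [Real.volume_Ioo]
    _ ≤ ENNReal.ofReal t := ENNReal.ofReal_le_ofReal (by rw [hpow]; exact le_of_lt hm)

end CalkinAux

namespace CalkinAux

open scoped Classical

lemma tsum_le_geom (N : ℤ) :
    (∑' n : ℤ, if n ≤ N then ENNReal.ofReal ((1/2) * (2:ℝ) ^ n) else 0)
      ≤ ENNReal.ofReal ((2:ℝ) ^ N) := by
  have hinj : Function.Injective (fun m : ℕ => N - (m : ℤ)) := by
    intro a b h
    simp only [sub_right_inj, Int.natCast_inj] at h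
    exact_mod_cast h
  have hsupp : (Function.support fun n : ℤ =>
      if n ≤ N then ENNReal.ofReal ((1/2) * (2:ℝ) ^ n) else 0)
        ⊆ Set.range fun m : ℕ => N - (m : ℤ) := by
    intro n hn
    simp only [Function.mem_support, ne_eq, ite_eq_right_iff, not_forall] at hn
    obtain ⟨hnN, -⟩ := hn
    exact ⟨(N - n).toNat, by show N - ((N - n).toNat : ℤ) = n; omega⟩
  rw [← Function.Injective.tsum_eq hinj hsupp]
  have hterm : ∀ m : ℕ, (if N - (m:ℤ) ≤ N then ENNReal.ofReal ((1/2) * (2:ℝ) ^ (N - (m:ℤ))) else 0)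
      = ENNReal.ofReal ((2:ℝ) ^ N) * (ENNReal.ofReal (1/2)) ^ (m + 1) := by
    intro m
    rw [if_pos (by omega)]
    rw [← ENNReal.ofReal_pow (by norm_num), ← ENNReal.ofReal_mul (by positivity)]
    congr 1
    rw [zpow_sub₀ (by norm_num : (2:ℝ) ≠ 0), zpow_natCast]
    rw [pow_succ, div_pow, one_pow]
    field_simp
  calc (∑' m : ℕ, if N - (m:ℤ) ≤ N then ENNReal.ofReal ((1/2) * (2:ℝ) ^ (N - (m:ℤ))) else 0)
      = ∑' m : ℕ, ENNReal.ofReal ((2:ℝ) ^ N) * (ENNReal.ofReal (1/2)) ^ (m + 1) :=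
        tsum_congr hterm
    _ = ENNReal.ofReal ((2:ℝ) ^ N) *
          (ENNReal.ofReal (1/2) * (1 - ENNReal.ofReal (1/2))⁻¹) := by
        rw [ENNReal.tsum_mul_left, ENNReal.tsum_geometric_add_one]
    _ ≤ ENNReal.ofReal ((2:ℝ) ^ N) := by
        have h12 : ENNReal.ofReal (1/2 : ℝ) = 2⁻¹ := by
          rw [one_div, ENNReal.ofReal_inv_of_pos (by norm_num)]
          norm_num
        rw [h12, ENNReal.one_sub_inv_two, inv_inv,
          ENNReal.inv_mul_cancel (by norm_num) (by norm_num), mul_one]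

lemma tsum_eq_top_of_unbdd {P : ℤ → Prop} (h : ∀ N : ℤ, ∃ k, N ≤ k ∧ P k) :
    (∑' n : ℤ, if P n then ENNReal.ofReal ((2:ℝ) ^ n) else 0) = ⊤ := by
  by_contra hne
  set S := ∑' n : ℤ, if P n then ENNReal.ofReal ((2:ℝ) ^ n) else 0 with hS
  obtain ⟨K, hK⟩ := exists_nat_gt S.toReal
  obtain ⟨k, hk1, hk2⟩ := h K
  have h1 : ENNReal.ofReal ((2:ℝ) ^ k) ≤ S := by
    have := ENNReal.le_tsum (f := fun n : ℤ => if P n then ENNReal.ofReal ((2:ℝ) ^ n) else 0) k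
    rwa [if_pos hk2] at this
  have h2 : (2:ℝ) ^ k ≤ S.toReal := (ENNReal.ofReal_le_iff_le_toReal hne).mp h1
  have h3 : (K : ℝ) < (2:ℝ) ^ (K : ℤ) := by
    have := Nat.lt_two_pow_self (n := K)
    have : ((K : ℕ) : ℝ) < ((2 ^ K : ℕ) : ℝ) := by exact_mod_cast this
    rw [Nat.cast_pow] at this
    rwa [zpow_natCast]
  have h4 : (2:ℝ) ^ (K : ℤ) ≤ (2:ℝ) ^ k := zpow_le_zpow_right₀ (by norm_num) hk1
  linarith

end CalkinAux

namespace CalkinAux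

open scoped Classical

lemma Dop_decomp (z : ℤ → ℝ) :
    Dop z = Set.indicator (blockSet (fun _ => True) 1 (3/2)) (Dop z)
      + Set.indicator (blockSet (fun _ => True) (3/2) 2) (Dop z) := by
  funext u
  rw [Pi.add_apply]
  by_cases hu : 0 < u
  · have hfl := zpow_floor_logb_le hu
    have hfr : u < 2 * 2 ^ ⌊Real.logb 2 u⌋ := by
      have := lt_zpow_floor_logb hu
      rw [zpow_add_one₀ (by norm_num : (2:ℝ) ≠ 0)] at this
      linarith
    by_cases hmem : u < (3/2) * 2 ^ ⌊Real.logb 2 u⌋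
    · have m1 : u ∈ blockSet (fun _ => True) 1 (3/2) :=
        ⟨hu, trivial, by rw [one_mul]; exact hfl, hmem⟩
      have m2 : u ∉ blockSet (fun _ => True) (3/2) 2 := by
        rintro ⟨-, -, h3, -⟩
        exact absurd h3 (not_le.mpr hmem)
      rw [Set.indicator_of_mem m1, Set.indicator_of_notMem m2, add_zero]
    · push_neg at hmem
      have m1 : u ∉ blockSet (fun _ => True) 1 (3/2) := by
        rintro ⟨-, -, -, h4⟩
        exact absurd h4 (not_lt.mpr hmem)
      have m2 : u ∈ blockSet (fun _ => True) (3/2) 2 := ⟨hu, trivial, hmem, hfr⟩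
      rw [Set.indicator_of_mem m2, Set.indicator_of_notMem m1, zero_add]
  · have m1 : u ∉ blockSet (fun _ => True) 1 (3/2) := fun h => hu h.1
    have m2 : u ∉ blockSet (fun _ => True) (3/2) 2 := fun h => hu h.1
    rw [Set.indicator_of_notMem m1, Set.indicator_of_notMem m2, Dop, if_neg hu, add_zero]

lemma Dop_mem_of_halves (E : Set (ℝ → ℝ))
    (hE_add : ∀ f g, f ∈ E → g ∈ E → f + g ∈ E)
    (hE_Calkin : ∀ f g, Measurable f → g ∈ E →
      (∀ t : ℝ, 0 < t → rearr f t ≤ rearr g t) → f ∈ E)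
    (x z : ℤ → ℝ) (hx : memSZ x) (hxE : Dop x ∈ E)
    (hle : ∀ s : ℝ, 0 ≤ s →
      (∑' n : ℤ, if s < |z n| then ENNReal.ofReal ((1/2) * (2:ℝ) ^ n) else 0)
        ≤ ∑' n : ℤ, if s < |x n| then ENNReal.ofReal ((2:ℝ) ^ n) else 0) :
    Dop z ∈ E := by
  have key : ∀ a b : ℝ, 1 ≤ a → b ≤ 2 → b - a = 1/2 →
      Set.indicator (blockSet (fun _ => True) a b) (Dop z) ∈ E := by
    intro a b ha hb2 hba
    refine hE_Calkin _ (Dop x)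
      ((measurable_Dop z).indicator (blockSet_measurableSet _ ha hb2)) hxE ?_
    intro t ht
    refine rearr_le_of_dist_le _ _ _ ?_ (dist_nonempty hx ht)
    intro s hs
    rw [dist_indicator z ha hb2 hs, dist_Dop x s,
      blockSet_volume _ ha hb2, blockSet_volume _ (le_refl (1:ℝ)) (by norm_num : (2:ℝ) ≤ 2)]
    calc (∑' n : ℤ, if s < |z n| then ENNReal.ofReal ((b - a) * 2 ^ n) else 0)
        = ∑' n : ℤ, if s < |z n| then ENNReal.ofReal ((1/2) * (2:ℝ) ^ n) else 0 := by
          refine tsum_congr fun n => ?_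
          rw [hba]
      _ ≤ ∑' n : ℤ, if s < |x n| then ENNReal.ofReal ((2:ℝ) ^ n) else 0 := hle s hs
      _ = ∑' n : ℤ, if s < |x n| then ENNReal.ofReal ((2 - 1) * (2:ℝ) ^ n) else 0 := by
          refine tsum_congr fun n => ?_
          norm_num
  rw [Dop_decomp z]
  exact hE_add _ _ (key 1 (3/2) (by norm_num) (by norm_num) (by norm_num))
    (key (3/2) 2 (by norm_num) (by norm_num) (by norm_num))

end CalkinAux


/-- a Calkin function space induces a shift-monotone sequence space
`E(ℤ) = {x : Dx ∈ E(0,∞)}`. -/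
theorem Calkin_to_shiftMonotone (E : Set (ℝ → ℝ))
    (hE_meas : ∀ f ∈ E, Measurable f)
    (hE_add : ∀ f g, f ∈ E → g ∈ E → f + g ∈ E)
    (hE_smul : ∀ (c : ℝ) f, f ∈ E → c • f ∈ E)
    (hE_Calkin : ∀ f g, Measurable f → g ∈ E →
      (∀ t : ℝ, 0 < t → rearr f t ≤ rearr g t) → f ∈ E) :
    (∀ x y, (memSZ x ∧ Dop x ∈ E) → (memSZ y ∧ Dop y ∈ E) →
      memSZ (x + y) ∧ Dop (x + y) ∈ E) ∧
    (∀ (c : ℝ) x, (memSZ x ∧ Dop x ∈ E) → memSZ (c • x) ∧ Dop (c • x) ∈ E) ∧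
    (∀ x, (memSZ x ∧ Dop x ∈ E) → memSZ (shiftR x) ∧ Dop (shiftR x) ∈ E) ∧
    (∀ x y, memSZ y → (memSZ x ∧ Dop x ∈ E) →
      (∀ n, ordNum y n ≤ ordNum x n) → memSZ y ∧ Dop y ∈ E) := by
  classical
  open CalkinAux in
  refine ⟨?_, ?_, ?_, ?_⟩
  · -- addition
    rintro x y ⟨hxS, hxE⟩ ⟨hyS, hyE⟩
    constructor
    · intro n
      obtain ⟨Mx, hMx⟩ := hxS n
      obtain ⟨My, hMy⟩ := hyS n
      refine ⟨Mx + My, ?_⟩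
      rintro r ⟨k, rfl⟩
      have h1 : |x k.1| ≤ Mx := hMx (Set.mem_range_self k)
      have h2 : |y k.1| ≤ My := hMy (Set.mem_range_self k)
      calc |(x + y) k.1| ≤ |x k.1| + |y k.1| := abs_add_le _ _
        _ ≤ Mx + My := add_le_add h1 h2
    · have hD : Dop (x + y) = Dop x + Dop y := by
        funext t
        simp only [Dop, Pi.add_apply]
        split
        · rfl
        · norm_num
      rw [hD]
      exact hE_add _ _ hxE hyE
  · -- scalar multiplication
    rintro c x ⟨hxS, hxE⟩
    constructor
    · intro n
      obtain ⟨Mx, hMx⟩ := hxS n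
      refine ⟨|c| * Mx, ?_⟩
      rintro r ⟨k, rfl⟩
      have h1 : |x k.1| ≤ Mx := hMx (Set.mem_range_self k)
      calc |(c • x) k.1| = |c| * |x k.1| := by
            simp [Pi.smul_apply, smul_eq_mul, abs_mul]
        _ ≤ |c| * Mx := mul_le_mul_of_nonneg_left h1 (abs_nonneg c)
    · have hD : Dop (c • x) = c • Dop x := by
        funext t
        simp only [Dop, Pi.smul_apply, smul_eq_mul]
        split
        · rfl
        · norm_num
      rw [hD]
      exact hE_smul _ _ hxE
  · -- right shift
    rintro x ⟨hxS, hxE⟩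
    constructor
    · intro n
      obtain ⟨M, hM⟩ := hxS (n - 1)
      refine ⟨M, ?_⟩
      rintro r ⟨k, rfl⟩
      exact hM (Set.mem_range_self (⟨k.1 - 1, by omega⟩ : {j : ℤ // n - 1 ≤ j}))
    · refine Dop_mem_of_halves E hE_add hE_Calkin x (shiftR x) hxS hxE ?_
      intro s hs
      refine le_of_eq ?_
      have hterm : ∀ n : ℤ,
          (if s < |shiftR x n| then ENNReal.ofReal ((1/2) * (2:ℝ) ^ n) else 0)
            = (fun m : ℤ => if s < |x m| then ENNReal.ofReal ((2:ℝ) ^ m) else 0)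
                ((Equiv.subRight (1:ℤ)) n) := by
        intro n
        simp only [Equiv.subRight_apply, shiftR]
        by_cases h : s < |x (n - 1)|
        · simp only [h, ↓reduceIte]
          congr 1
          rw [zpow_sub_one₀ (by norm_num : (2:ℝ) ≠ 0)]
          ring
        · simp only [h, ↓reduceIte]
      rw [tsum_congr hterm]
      exact Equiv.tsum_eq (Equiv.subRight (1:ℤ))
        (fun m : ℤ => if s < |x m| then ENNReal.ofReal ((2:ℝ) ^ m) else 0)
  · -- monotonicity
    rintro x y hyS ⟨hxS, hxE⟩ hord
    refine ⟨hyS, ?_⟩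
    refine Dop_mem_of_halves E hE_add hE_Calkin x y hxS hxE ?_
    intro s hs
    have hwit : ∀ n : ℤ, s < |y n| → ∃ k, n ≤ k ∧ s < |x k| := by
      intro n hyn
      haveI : Nonempty {k : ℤ // n ≤ k} := ⟨⟨n, le_refl n⟩⟩
      have h1 : |y n| ≤ ordNum y n :=
        le_ciSup (hyS n) (⟨n, le_refl n⟩ : {k : ℤ // n ≤ k})
      have h2 : s < ordNum x n := lt_of_lt_of_le (lt_of_lt_of_le hyn h1) (hord n)
      obtain ⟨k, hk⟩ := exists_lt_of_lt_ciSup h2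
      exact ⟨k.1, k.2, hk⟩
    by_cases hub : ∀ N : ℤ, ∃ n, N ≤ n ∧ s < |y n|
    · have hX : ∀ N : ℤ, ∃ k, N ≤ k ∧ s < |x k| := by
        intro N
        obtain ⟨n, hn, hyn⟩ := hub N
        obtain ⟨k, hk1, hk2⟩ := hwit n hyn
        exact ⟨k, le_trans hn hk1, hk2⟩
      have htop := tsum_eq_top_of_unbdd hX
      exact htop ▸ le_top
    · push_neg at hub
      obtain ⟨N, hN⟩ := hub
      by_cases hne : ∃ n : ℤ, s < |y n|
      · obtain ⟨M, hM1, hM2⟩ := Int.exists_greatest_of_bdd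
          (P := fun n => s < |y n|)
          ⟨N, fun n hn => by
            by_contra hc
            push_neg at hc
            have := hN n (by omega)
            linarith⟩ hne
        obtain ⟨k, hk1, hk2⟩ := hwit M hM1
        calc (∑' n : ℤ, if s < |y n| then ENNReal.ofReal ((1/2) * (2:ℝ) ^ n) else 0)
            ≤ ∑' n : ℤ, if n ≤ M then ENNReal.ofReal ((1/2) * (2:ℝ) ^ n) else 0 := by
              refine ENNReal.tsum_le_tsum fun n => ?_
              by_cases hyn : s < |y n|
              · rw [if_pos hyn, if_pos (hM2 n hyn)]
              · rw [if_neg hyn]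
                exact zero_le
          _ ≤ ENNReal.ofReal ((2:ℝ) ^ M) := tsum_le_geom M
          _ ≤ ENNReal.ofReal ((2:ℝ) ^ k) :=
              ENNReal.ofReal_le_ofReal (zpow_le_zpow_right₀ (by norm_num) hk1)
          _ ≤ ∑' n : ℤ, if s < |x n| then ENNReal.ofReal ((2:ℝ) ^ n) else 0 := by
              have hle := ENNReal.le_tsum
                (f := fun n : ℤ => if s < |x n| then ENNReal.ofReal ((2:ℝ) ^ n) else 0) k
              rwa [if_pos hk2] at hle
      · push_neg at hne
        have hzero : (∑' n : ℤ, if s < |y n| then ENNReal.ofReal ((1/2) * (2:ℝ) ^ n) else 0)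
            = 0 := by
          rw [tsum_congr fun n => if_neg (not_lt.mpr (hne n))]
          exact tsum_zero
        rw [hzero]
        exact zero_le
end
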